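/- arXiv:2111.14393 — 7 statements merged into one kernel-verified Lean document; each statement's English description precedes it below -/
import Mathlib

section
/- Let M be a metric space with base point 0, and let x, y, u, v ∈ M with x ≠ y and u ≠ v, and assume d(x,y) ≥ d(u,v). If for some ε > 0 one has d(x,v) + d(u,y) ≥ d(x,y) + d(u,v) − ε·d(x,y), then for every real-valued Lipschitz function f on M with f(0)=0 and Lipschitz constant at most 1 defined by f(p) = min{ d(y,p), d(v,p) + d(y,u) − d(u,v) } + a (with a chosen so f(0)=0), one has f(x) − f(y) ≥ (1−ε)·d(x,y) and f(u) − f(v) = d(u,v). -/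
/-- the McShane-type witness function from Lemma 1.2 (`lip_norm`),
`f p = min (d y p) (d v p + d y u - d u v) + a` with `a` chosen so that `f z = 0`,
is `1`-Lipschitz, vanishes at the base point, and satisfies
`f x - f y ≥ (1 - ε) d(x,y)` and `f u - f v = d(u,v)`. -/
theorem stmt0 {M : Type*} [MetricSpace M] (z x y u v : M)
    (hxy : x ≠ y) (huv : u ≠ v) (hd : dist u v ≤ dist x y)
    (ε : ℝ) (hε : 0 < ε)
    (h : dist x y + dist u v - ε * dist x y ≤ dist x v + dist u y)
    (f : M → ℝ)
    (hf : ∀ p, f p = min (dist y p) (dist v p + dist y u - dist u v)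
          - min (dist y z) (dist v z + dist y u - dist u v)) :
    f z = 0 ∧ LipschitzWith 1 f ∧
      (1 - ε) * dist x y ≤ f x - f y ∧ f u - f v = dist u v := by
  have hgy : min (dist y y) (dist v y + dist y u - dist u v) = 0 := by
    have : (0:ℝ) ≤ dist v y + dist y u - dist u v := by
      have := dist_triangle u y v
      rw [dist_comm v y]
      linarith [dist_comm u y, dist_comm u v]
    simp [this]
  have hgu : min (dist y u) (dist v u + dist y u - dist u v) = dist y u := by
    rw [dist_comm v u]
    simp
  have hgv : min (dist y v) (dist v v + dist y u - dist u v) = dist y u - dist u v := by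
    have h1 : dist y u - dist u v ≤ dist y v := by
      have := dist_triangle y v u
      linarith [dist_comm v u]
    simp [min_eq_right, h1]
  refine ⟨by rw [hf]; ring, ?_, ?_, ?_⟩
  · rw [lipschitzWith_iff_dist_le_mul]
    intro p q
    rw [hf p, hf q]
    have key : dist (min (dist y p) (dist v p + dist y u - dist u v))
        (min (dist y q) (dist v q + dist y u - dist u v)) ≤ dist p q := by
      rw [Real.dist_eq]
      refine (abs_min_sub_min_le_max _ _ _ _).trans (max_le ?_ ?_)
      · rw [dist_comm y p, dist_comm y q]; exact abs_dist_sub_le p q y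
      · have : dist v p + dist y u - dist u v - (dist v q + dist y u - dist u v)
            = dist p v - dist q v := by rw [dist_comm v p, dist_comm v q]; ring
        rw [this]; exact abs_dist_sub_le p q v
    simpa [Real.dist_eq] using key
  · rw [hf x, hf y, hgy]
    have h1 : (1 - ε) * dist x y ≤ dist y x := by
      rw [dist_comm y x]; nlinarith [dist_nonneg (x := x) (y := y)]
    have h2 : (1 - ε) * dist x y ≤ dist v x + dist y u - dist u v := by
      rw [dist_comm v x, dist_comm y u]; nlinarith
    have := le_min h1 h2
    linarith
  · rw [hf u, hf v, hgu, hgv]; ring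
end

section
/- Let M be a metric space, u, v ∈ M, and r, s, δ > 0 be such that [u,v]_δ ⊆ B(u,r) ∪ B(v,s), where [u,v]_δ = { p : d(u,p) + d(v,p) < d(u,v) + δ } and B denotes closed balls. Then for every ε > 0 there exist δ' > 0, x ∈ B(u,r), and y ∈ B(v,s) such that: (1) d(u,x) + d(v,y) + d(x,y) < d(u,v) + δ; (2) [x,y]_{δ'} ⊆ [u,v]_δ; (3) d(x,y) ≤ d(u,v); (4) [x,y]_{δ'} ⊆ B(x,ε) ∪ B(y,ε). -/
/-- Lemma `emptyset`: if `[u,v]_δ ⊆ B(u,r) ∪ B(v,s)`, then for every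
`ε > 0` there are `δ' > 0`, `x ∈ B(u,r)` and `y ∈ B(v,s)` satisfying conditions
(1)-(4) of the lemma. -/
theorem stmt3 {M : Type*} [MetricSpace M] (u v : M) (r s δ : ℝ)
    (hr : 0 < r) (hs : 0 < s) (hδ : 0 < δ)
    (hseg : ∀ p : M, dist u p + dist v p < dist u v + δ →
      p ∈ Metric.closedBall u r ∪ Metric.closedBall v s) :
    ∀ ε > (0 : ℝ), ∃ δ' > (0 : ℝ), ∃ x ∈ Metric.closedBall u r,
      ∃ y ∈ Metric.closedBall v s,
        dist u x + dist v y + dist x y < dist u v + δ ∧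
        (∀ p : M, dist x p + dist y p < dist x y + δ' →
          dist u p + dist v p < dist u v + δ) ∧
        dist x y ≤ dist u v ∧
        (∀ p : M, dist x p + dist y p < dist x y + δ' →
          p ∈ Metric.closedBall x ε ∪ Metric.closedBall y ε) := by
  intro ε hε
  set D := dist u v with hDdef
  have hD0 : (0:ℝ) ≤ D := dist_nonneg
  obtain ⟨A, hA1, hAδ⟩ : ∃ A : ℝ, 1 ≤ A ∧ A * δ = δ + 8 * D := by
    refine ⟨1 + 8 * D / δ, ?_, ?_⟩
    · have : (0:ℝ) ≤ 8 * D / δ := by positivity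
      linarith
    · field_simp
  have hA0 : (0:ℝ) < A := by linarith
  have h2A : (0:ℝ) < 2 + A := by linarith
  obtain ⟨δ', hδ'pos, hδ'1, hδ'ε2⟩ :
      ∃ d : ℝ, 0 < d ∧ d ≤ δ/4 ∧ (2+A)*d ≤ ε/2 := by
    refine ⟨min (δ/4) (ε/(2*(2+A))), lt_min (by linarith) (by positivity),
      min_le_left _ _, ?_⟩
    have h1 : (2+A)*(min (δ/4) (ε/(2*(2+A)))) ≤ (2+A)*(ε/(2*(2+A))) :=
      mul_le_mul_of_nonneg_left (min_le_right _ _) h2A.le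
    have h2 : (2+A)*(ε/(2*(2+A))) = ε/2 := by
      field_simp
    linarith
  have hδ'ε : δ' < ε := by
    have h3 : 3 * δ' ≤ (2+A)*δ' := mul_le_mul_of_nonneg_right (by linarith) hδ'pos.le
    linarith
  obtain ⟨η, hηpos, hηε, hηδ⟩ : ∃ e : ℝ, 0 < e ∧ e ≤ ε ∧ e ≤ δ/8 :=
    ⟨min ε (δ/8), lt_min hε (by linarith), min_le_left _ _, min_le_right _ _⟩
  -- the set of values of the functional G over admissible pairs
  set T : Set ℝ := {t | ∃ x y : M, dist u x ≤ r ∧ dist v y ≤ s ∧ dist x y ≤ D ∧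
      t = 2 * dist x y + A * (dist u x + dist x y + dist y v)} with hTdef
  have hTne : T.Nonempty := by
    refine ⟨2 * D + A * (0 + D + 0), u, v, by simp [hr.le], by simp [hs.le], le_rfl, ?_⟩
    simp [dist_comm v u, hDdef]
  have hTbdd : BddBelow T := by
    refine ⟨0, ?_⟩
    rintro t ⟨x, y, -, -, -, rfl⟩
    have := dist_nonneg (x := x) (y := y)
    have := dist_nonneg (x := u) (y := x)
    have := dist_nonneg (x := y) (y := v)
    positivity
  set m := sInf T with hmdef
  have hm_ub : m ≤ 2*D + A*D := by
    have h := csInf_le hTbdd (show 2 * D + A * (0 + D + 0) ∈ T from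
      ⟨u, v, by simp [hr.le], by simp [hs.le], le_rfl, by simp [dist_comm v u, hDdef]⟩)
    simp only [zero_add, add_zero] at h
    exact h
  obtain ⟨t, ht, htlt⟩ := Real.lt_sInf_add_pos hTne hηpos
  obtain ⟨x, y, hx, hy, hxy, hteq⟩ := ht
  rw [← hmdef] at htlt
  -- basic length estimate
  have hF : dist u x + dist x y + dist y v < D + 3*δ/8 := by
    have h1 : A * (dist u x + dist x y + dist y v) ≤ t := by
      rw [hteq]
      have := dist_nonneg (x := x) (y := y)
      nlinarith
    have h2 : t < 2*D + A*D + η := by linarith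
    have h4 : A * (D + 3*δ/8) = A*D + 3*(A*δ)/8 := by ring
    rw [hAδ] at h4
    have h3 : A * (dist u x + dist x y + dist y v) < A * (D + 3*δ/8) := by
      linarith
    exact lt_of_mul_lt_mul_left h3 hA0.le
  -- condition (2), stated as an auxiliary fact
  have key2 : ∀ p : M, dist x p + dist y p < dist x y + δ' →
      dist u p + dist v p < D + δ := by
    intro p hp
    have t1 := dist_triangle u x p
    have t2 := dist_triangle v y p
    have hvy : dist v y = dist y v := dist_comm v y
    linarith
  refine ⟨δ', hδ'pos, x, ?_, y, ?_, ?_, key2, hxy, ?_⟩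
  · simpa [Metric.mem_closedBall, dist_comm] using hx
  · simpa [Metric.mem_closedBall, dist_comm] using hy
  · have hvy : dist v y = dist y v := dist_comm v y
    linarith
  · intro p hp
    by_contra hcon
    simp only [Set.mem_union, Metric.mem_closedBall, not_or, not_le] at hcon
    obtain ⟨hpx, hpy⟩ := hcon
    have hpx' : ε < dist x p := by rwa [dist_comm] at hpx
    have hpy' : ε < dist y p := by rwa [dist_comm] at hpy
    have hpseg := hseg p (key2 p hp)
    simp only [Set.mem_union, Metric.mem_closedBall] at hpseg
    have htm : t < m + ε := by linarith
    rcases hpseg with hpu | hpv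
    · -- replace x by p
      have hd : dist y p < dist x y + δ' - ε := by linarith
      have hdD : dist p y ≤ D := by
        rw [dist_comm]; linarith
      have hmem : 2 * dist p y + A * (dist u p + dist p y + dist y v) ∈ T :=
        ⟨p, y, by rwa [dist_comm], hy, hdD, rfl⟩
      have hmle : m ≤ 2 * dist p y + A * (dist u p + dist p y + dist y v) :=
        csInf_le hTbdd hmem
      have tup : dist u p ≤ dist u x + dist x p := dist_triangle u x p
      have hpyc : dist p y = dist y p := dist_comm p y
      have hmul : A * (dist u p + dist p y + dist y v) ≤
          A * (dist u x + dist x y + δ' + dist y v) := by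
        apply mul_le_mul_of_nonneg_left _ hA0.le
        linarith
      have e1 : A * (dist u x + dist x y + δ' + dist y v) =
          A * (dist u x + dist x y + dist y v) + A * δ' := by ring
      have e2 : (2+A)*δ' = 2*δ' + A*δ' := by ring
      have : 2 * dist p y + A * (dist u p + dist p y + dist y v) < m := by
        have hlt : 2 * dist p y + A * (dist u p + dist p y + dist y v) <
            t + (2+A)*δ' - 2*ε := by
          rw [hteq]; linarith
        linarith
      linarith
    · -- replace y by p
      have hd : dist x p < dist x y + δ' - ε := by linarith
      have hdD : dist x p ≤ D := by linarith
      have hmem : 2 * dist x p + A * (dist u x + dist x p + dist p v) ∈ T :=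
        ⟨x, p, hx, by rwa [dist_comm], hdD, rfl⟩
      have hmle : m ≤ 2 * dist x p + A * (dist u x + dist x p + dist p v) :=
        csInf_le hTbdd hmem
      have tpv : dist p v ≤ dist p y + dist y v := dist_triangle p y v
      have hpyc : dist p y = dist y p := dist_comm p y
      have hmul : A * (dist u x + dist x p + dist p v) ≤
          A * (dist u x + dist x y + δ' + dist y v) := by
        apply mul_le_mul_of_nonneg_left _ hA0.le
        linarith
      have e1 : A * (dist u x + dist x y + δ' + dist y v) =
          A * (dist u x + dist x y + dist y v) + A * δ' := by ring
      have e2 : (2+A)*δ' = 2*δ' + A*δ' := by ring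
      have : 2 * dist x p + A * (dist u x + dist x p + dist p v) < m := by
        have hlt : 2 * dist x p + A * (dist u x + dist x p + dist p v) <
            t + (2+A)*δ' - 2*ε := by
          rw [hteq]; linarith
        linarith
      linarith
end

section
/- Let M be a complete metric space, u, v ∈ M, and r, s, δ > 0 with r + s < d(u,v) such that [u,v]_δ ⊆ B(u,r) ∪ B(v,s). Then there exist x ∈ B(u,r) and y ∈ B(v,s) with x ≠ y such that for every ε > 0 there exists γ > 0 with [x,y]_γ ⊆ B(x,ε) ∪ B(y,ε). -/
open Filter Topology

/-- Ekeland's variational principle (weak form) for a nonnegative continuous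
function on a complete metric space. -/
private theorem my_ekeland {X : Type*} [MetricSpace X] [CompleteSpace X]
    (f : X → ℝ) (hfc : Continuous f) (hf0 : ∀ x, 0 ≤ f x)
    (l : ℝ) (hl : 0 < l) (x₀ : X) :
    ∃ z : X, f z + l * dist x₀ z ≤ f x₀ ∧ ∀ w : X, f z ≤ f w + l * dist z w := by
  classical
  have hbdd : ∀ z : X, BddBelow (f '' {w | f w + l * dist z w ≤ f z}) :=
    fun z => ⟨0, by rintro a ⟨w, _, rfl⟩; exact hf0 w⟩
  have hself : ∀ z : X, z ∈ {w | f w + l * dist z w ≤ f z} := by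
    intro z; simp
  have hstep : ∀ (n : ℕ) (z : X), ∃ w : X,
      (f w + l * dist z w ≤ f z) ∧
      f w < sInf (f '' {w | f w + l * dist z w ≤ f z}) + (1/2) ^ n := by
    intro n z
    have hne : (f '' {w | f w + l * dist z w ≤ f z}).Nonempty := ⟨f z, z, hself z, rfl⟩
    have hpos : (0:ℝ) < (1/2)^n := by positivity
    obtain ⟨a, ⟨w, hw, rfl⟩, hlt⟩ := exists_lt_of_csInf_lt hne (lt_add_of_pos_right _ hpos)
    exact ⟨w, hw, hlt⟩
  choose g hg1 hg2 using hstep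
  let seq : ℕ → X := fun n => Nat.rec x₀ (fun n z => g n z) n
  have hseq0 : seq 0 = x₀ := rfl
  have hnext : ∀ n, f (seq (n+1)) + l * dist (seq n) (seq (n+1)) ≤ f (seq n) :=
    fun n => hg1 n (seq n)
  have hinf : ∀ n, f (seq (n+1)) <
      sInf (f '' {w | f w + l * dist (seq n) w ≤ f (seq n)}) + (1/2)^n :=
    fun n => hg2 n (seq n)
  have hmono : ∀ m n, m ≤ n → f (seq n) + l * dist (seq m) (seq n) ≤ f (seq m) := by
    intro m n h
    induction n, h using Nat.le_induction with
    | base => simp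
    | succ n hmn ih =>
      have h1 := hnext n
      have h2 := dist_triangle (seq m) (seq n) (seq (n+1))
      have h3 : l * dist (seq m) (seq (n+1)) ≤
          l * dist (seq m) (seq n) + l * dist (seq n) (seq (n+1)) := by
        have := mul_le_mul_of_nonneg_left h2 hl.le
        rw [mul_add] at this; exact this
      linarith
  have hfanti : ∀ m n, m ≤ n → f (seq n) ≤ f (seq m) := by
    intro m n h
    have h1 := hmono m n h
    have h2 : 0 ≤ l * dist (seq m) (seq n) := mul_nonneg hl.le dist_nonneg
    linarith
  have hφc : CauchySeq fun n => f (seq n) := by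
    have hanti : Antitone fun n => f (seq n) :=
      antitone_nat_of_succ_le fun n => hfanti n (n+1) (Nat.le_succ n)
    have hbd : BddBelow (Set.range fun n => f (seq n)) :=
      ⟨0, by rintro a ⟨n, rfl⟩; exact hf0 _⟩
    exact (tendsto_atTop_ciInf hanti hbd).cauchySeq
  have hcauchy : CauchySeq seq := by
    rw [Metric.cauchySeq_iff]
    intro ε hε
    obtain ⟨N, hN⟩ := Metric.cauchySeq_iff.mp hφc (l * ε) (mul_pos hl hε)
    refine ⟨N, fun m hm n hn => ?_⟩
    rcases le_total m n with h | h
    · have h1 := hmono m n h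
      have h2 := hN m hm n hn
      rw [Real.dist_eq, abs_lt] at h2
      have h3 : l * dist (seq m) (seq n) < l * ε := by linarith [h2.2]
      exact lt_of_mul_lt_mul_left h3 hl.le
    · have h1 := hmono n m h
      have h2 := hN m hm n hn
      rw [Real.dist_eq, abs_lt] at h2
      have h3 : l * dist (seq n) (seq m) < l * ε := by linarith [h2.1]
      rw [dist_comm]
      exact lt_of_mul_lt_mul_left h3 hl.le
  obtain ⟨z, hz⟩ := cauchySeq_tendsto_of_complete hcauchy
  have hzS : ∀ m, f z + l * dist (seq m) z ≤ f (seq m) := by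
    intro m
    have hcont : Tendsto (fun n => f (seq n) + l * dist (seq m) (seq n)) atTop
        (𝓝 (f z + l * dist (seq m) z)) :=
      (((hfc.tendsto z).comp hz)).add ((tendsto_const_nhds.dist hz).const_mul l)
    refine le_of_tendsto hcont ?_
    exact Filter.eventually_atTop.2 ⟨m, fun n hn => hmono m n hn⟩
  refine ⟨z, by simpa [hseq0] using hzS 0, ?_⟩
  intro w
  by_contra hcon
  push_neg at hcon
  have hwS : ∀ m, f w + l * dist (seq m) w ≤ f (seq m) := by
    intro m
    have h1 := hzS m
    have h2 := dist_triangle (seq m) z w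
    have h3 : l * dist (seq m) w ≤ l * dist (seq m) z + l * dist z w := by
      have := mul_le_mul_of_nonneg_left h2 hl.le
      rw [mul_add] at this; exact this
    linarith
  have hfz_le : ∀ m, f z ≤ f w + (1/2:ℝ)^m := by
    intro m
    have h1 := hinf m
    have h2 : sInf (f '' {w' | f w' + l * dist (seq m) w' ≤ f (seq m)}) ≤ f w :=
      csInf_le (hbdd _) ⟨w, hwS m, rfl⟩
    have h3 : f z ≤ f (seq (m+1)) := by
      have h4 := hzS (m+1)
      have h5 : 0 ≤ l * dist (seq (m+1)) z := mul_nonneg hl.le dist_nonneg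
      linarith
    linarith
  have hle : f z ≤ f w := by
    by_contra hlt
    push_neg at hlt
    obtain ⟨m, hm⟩ := exists_pow_lt_of_lt_one (by linarith : (0:ℝ) < f z - f w)
      (by norm_num : (1/2:ℝ) < 1)
    have := hfz_le m
    linarith
  have : 0 ≤ l * dist z w := mul_nonneg hl.le dist_nonneg
  linarith

private lemma dist_l1 {α β : Type*} [MetricSpace α] [MetricSpace β]
    (f g : WithLp 1 (α × β)) :
    dist f g = dist f.fst g.fst + dist f.snd g.snd := by
  rw [WithLp.prod_dist_eq_add (by norm_num)]
  norm_num

private lemma ekeland_pair {M : Type*} [MetricSpace M] [CompleteSpace M]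
    (u v : M) (r s l : ℝ) (hr : 0 ≤ r) (hs : 0 ≤ s) (hl : 0 < l) :
    ∃ x ∈ Metric.closedBall u r, ∃ y ∈ Metric.closedBall v s,
      dist x y + l * (dist u x + dist v y) ≤ dist u v ∧
      ∀ x' ∈ Metric.closedBall u r, ∀ y' ∈ Metric.closedBall v s,
        dist x y ≤ dist x' y' + l * (dist x x' + dist y y') := by
  classical
  set K : Set (WithLp 1 (M × M)) :=
    {z | z.fst ∈ Metric.closedBall u r ∧ z.snd ∈ Metric.closedBall v s} with hKdef
  have hKclosed : IsClosed K := by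
    have hKeq : K = (WithLp.equiv 1 (M × M)) ⁻¹'
        (Metric.closedBall u r ×ˢ Metric.closedBall v s) := rfl
    rw [hKeq]
    exact (Metric.isClosed_closedBall.prod Metric.isClosed_closedBall).preimage
      (WithLp.prod_continuous_ofLp 1 M M)
  haveI : CompleteSpace K := hKclosed.completeSpace_coe
  set f : K → ℝ := fun z => dist z.val.fst z.val.snd with hfdef
  have hfc : Continuous f := by
    exact (continuous_fst.comp ((WithLp.prod_continuous_ofLp 1 M M).comp
      continuous_subtype_val)).dist (continuous_snd.comp
      ((WithLp.prod_continuous_ofLp 1 M M).comp continuous_subtype_val))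
  have hf0 : ∀ z : K, 0 ≤ f z := fun z => dist_nonneg
  have huv : (WithLp.toLp 1 (u, v)) ∈ K :=
    ⟨Metric.mem_closedBall_self hr, Metric.mem_closedBall_self hs⟩
  obtain ⟨z, hz1, hz2⟩ := my_ekeland f hfc hf0 l hl ⟨(WithLp.toLp 1 (u, v)), huv⟩
  refine ⟨z.val.fst, z.property.1, z.val.snd, z.property.2, ?_, ?_⟩
  · have hd : dist (⟨(WithLp.toLp 1 (u, v)), huv⟩ : K) z
        = dist u z.val.fst + dist v z.val.snd := by
      rw [Subtype.dist_eq, dist_l1]; rfl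
    rw [hd] at hz1
    exact hz1
  · intro x' hx' y' hy'
    have hw : (WithLp.toLp 1 (x', y')) ∈ K := ⟨hx', hy'⟩
    have h := hz2 ⟨(WithLp.toLp 1 (x', y')), hw⟩
    have hd : dist z (⟨(WithLp.toLp 1 (x', y')), hw⟩ : K)
        = dist z.val.fst x' + dist z.val.snd y' := by
      rw [Subtype.dist_eq, dist_l1]; rfl
    rw [hd] at h
    exact h

/-- Lemma `lemma_dent`: if `M` is complete, `r + s < d(u,v)` and
`[u,v]_δ ⊆ B(u,r) ∪ B(v,s)`, then there are `x ∈ B(u,r)`, `y ∈ B(v,s)`, `x ≠ y`,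
such that for every `ε > 0` some `γ > 0` gives `[x,y]_γ ⊆ B(x,ε) ∪ B(y,ε)`. -/
theorem stmt4 {M : Type*} [MetricSpace M] [CompleteSpace M] (u v : M)
    (r s δ : ℝ) (hr : 0 < r) (hs : 0 < s) (hδ : 0 < δ)
    (hrs : r + s < dist u v)
    (hseg : ∀ p : M, dist u p + dist v p < dist u v + δ →
      p ∈ Metric.closedBall u r ∪ Metric.closedBall v s) :
    ∃ x ∈ Metric.closedBall u r, ∃ y ∈ Metric.closedBall v s, x ≠ y ∧
      ∀ ε > (0 : ℝ), ∃ γ > (0 : ℝ), ∀ p : M,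
        dist x p + dist y p < dist x y + γ →
        p ∈ Metric.closedBall x ε ∪ Metric.closedBall y ε := by
  have hrs0 : 0 < r + s := by linarith
  obtain ⟨l, hl0, hl1, hkey⟩ : ∃ l : ℝ, 0 < l ∧ l < 1 ∧ (1 - l) * (r + s) ≤ δ / 2 := by
    refine ⟨1 - min (1/2) (δ / (2 * (r + s))), ?_, ?_, ?_⟩
    · have h := min_le_left (1/2 : ℝ) (δ / (2 * (r + s)))
      linarith
    · have h : 0 < min (1/2 : ℝ) (δ / (2 * (r + s))) := lt_min (by norm_num) (by positivity)
      linarith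
    · have h : (1 : ℝ) - (1 - min (1/2) (δ / (2 * (r + s)))) = min (1/2) (δ / (2 * (r + s))) := by
        ring
      rw [h]
      calc min (1/2 : ℝ) (δ / (2 * (r + s))) * (r + s) ≤ δ / (2 * (r + s)) * (r + s) :=
            mul_le_mul_of_nonneg_right (min_le_right _ _) hrs0.le
        _ = δ / 2 := by field_simp
  obtain ⟨x, hx, y, hy, h1, h2⟩ := ekeland_pair u v r s l hr.le hs.le hl0
  have hux : dist u x ≤ r := by rw [dist_comm]; exact Metric.mem_closedBall.mp hx
  have hvy : dist v y ≤ s := by rw [dist_comm]; exact Metric.mem_closedBall.mp hy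
  refine ⟨x, hx, y, hy, ?_, ?_⟩
  · intro hxy
    subst hxy
    have h3 := dist_triangle u x v
    rw [dist_comm x v] at h3
    linarith
  · intro ε hε
    obtain ⟨γ, hγ0, hγδ, hγε⟩ : ∃ γ : ℝ, 0 < γ ∧ γ ≤ δ/2 ∧ γ ≤ (1 - l) * ε :=
      ⟨min (δ/2) ((1 - l) * ε),
        lt_min (by linarith) (mul_pos (by linarith) hε), min_le_left _ _, min_le_right _ _⟩
    refine ⟨γ, hγ0, ?_⟩
    intro p hp
    have hA : (1 - l) * (dist u x + dist v y) ≤ δ / 2 :=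
      le_trans (mul_le_mul_of_nonneg_left (by linarith) (by linarith)) hkey
    have hA' : dist u x + dist v y - l * (dist u x + dist v y) ≤ δ / 2 := by nlinarith [hA]
    have hγε' : γ ≤ ε - l * ε := by nlinarith [hγε]
    have hpuv : dist u p + dist v p < dist u v + δ := by
      have t1 := dist_triangle u x p
      have t2 := dist_triangle v y p
      linarith
    rcases hseg p hpuv with hpu | hpv
    · left
      have h3 := h2 p hpu y hy
      rw [dist_self, add_zero] at h3
      rw [dist_comm y p] at hp
      have h4 : dist x p - l * dist x p < ε - l * ε := by linarith
      have h5 : (1 - l) * dist x p < (1 - l) * ε := by nlinarith [h4]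
      have h6 : dist x p < ε := lt_of_mul_lt_mul_left h5 (by linarith)
      rw [Metric.mem_closedBall, dist_comm]
      linarith
    · right
      have h3 := h2 x hx p hpv
      rw [dist_self, zero_add] at h3
      have h4 : dist y p - l * dist y p < ε - l * ε := by linarith
      have h5 : (1 - l) * dist y p < (1 - l) * ε := by nlinarith [h4]
      have h6 : dist y p < ε := lt_of_mul_lt_mul_left h5 (by linarith)
      rw [Metric.mem_closedBall, dist_comm]
      linarith
end

section
/- Let M be the metric space with points ⋃_{n≥0} S_n, where S_0 = {(0,0),(1,0)} and S_n = { (k/2^n, 1/2^n) : 0 ≤ k ≤ 2^n }, and metric d((a₁,b₁),(a₂,b₂)) = |a₁ − a₂| if b₁ = b₂ and min{a₁ + a₂, 2 − a₁ − a₂} + |b₁ − b₂| otherwise. Then M is a complete metric space. -/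
/-- The distance of Example 3.1. -/
noncomputable def exDist (p q : ℝ × ℝ) : ℝ :=
  if p.2 = q.2 then |p.1 - q.1|
  else min (p.1 + q.1) (2 - p.1 - q.1) + |p.2 - q.2|

/-- The point set of Example 3.1: `S₀ = {(0,0),(1,0)}` together with the levels
`Sₙ = {(k/2ⁿ, 1/2ⁿ) : 0 ≤ k ≤ 2ⁿ}` for `n ≥ 1`. -/
def exDomain : Set (ℝ × ℝ) :=
  {((0 : ℝ), (0 : ℝ)), ((1 : ℝ), (0 : ℝ))} ∪
    ⋃ n : ℕ, {p | ∃ k : ℕ, k ≤ 2 ^ (n + 1) ∧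
      p = ((k : ℝ) / 2 ^ (n + 1), 1 / 2 ^ (n + 1))}

lemma exDomain_cases {p : ℝ × ℝ} (hp : p ∈ exDomain) :
    (p = ((0:ℝ),(0:ℝ)) ∨ p = ((1:ℝ),(0:ℝ))) ∨
      ∃ n k : ℕ, k ≤ 2 ^ (n+1) ∧ p = ((k:ℝ)/2^(n+1), 1/2^(n+1)) := by
  rcases hp with h | h
  · exact Or.inl (by simpa using h)
  · right; simpa using h

lemma exDomain_bounds {p : ℝ × ℝ} (hp : p ∈ exDomain) :
    0 ≤ p.1 ∧ p.1 ≤ 1 ∧ 0 ≤ p.2 := by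
  rcases exDomain_cases hp with (h|h) | ⟨n,k,hk,h⟩
  · subst h; norm_num
  · subst h; norm_num
  · subst h
    refine ⟨by positivity, ?_, by positivity⟩
    show (k:ℝ)/2^(n+1) ≤ 1
    rw [div_le_one (by positivity)]
    exact_mod_cast hk

def isLevel (x : ℝ) : Prop := x = 0 ∨ ∃ n : ℕ, x = 1/2^(n+1)

lemma exDomain_level {p : ℝ × ℝ} (hp : p ∈ exDomain) : isLevel p.2 := by
  rcases exDomain_cases hp with (h|h) | ⟨n,k,hk,h⟩
  · subst h; exact Or.inl rfl
  · subst h; exact Or.inl rfl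
  · subst h; exact Or.inr ⟨n, rfl⟩

lemma level_gap {x y : ℝ} (hx : isLevel x) (hy : isLevel y) (hne : x ≠ y) :
    x ≤ 2 * |x - y| := by
  rcases hx with hx | ⟨a, hx⟩
  · subst hx; positivity
  rcases hy with hy | ⟨b, hy⟩
  · subst hx; subst hy
    rw [sub_zero, abs_of_pos (by positivity)]
    have h0 : (0:ℝ) < 1/2^(a+1) := by positivity
    linarith
  subst hx; subst hy
  have hab : a ≠ b := fun h => hne (by rw [h])
  rcases Nat.lt_or_ge a b with hab' | hab'
  · have h1 : (1:ℝ)/2^(b+1) ≤ 1/2^(a+2) := by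
      apply one_div_le_one_div_of_le (by positivity)
      apply pow_le_pow_right₀ (by norm_num)
      omega
    have h2 : (1:ℝ)/2^(a+2) = (1/2^(a+1))/2 := by
      rw [pow_succ]; ring
    have hpos : (0:ℝ) < 1/2^(a+1) := by positivity
    have : (1:ℝ)/2^(b+1) < 1/2^(a+1) := by
      calc (1:ℝ)/2^(b+1) ≤ (1/2^(a+1))/2 := h2 ▸ h1
      _ < 1/2^(a+1) := by linarith
    rw [abs_of_pos (by linarith)]
    linarith [h2 ▸ h1]
  · have hba : b < a := lt_of_le_of_ne hab' (Ne.symm hab)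
    have h1 : (1:ℝ)/2^(a+1) ≤ 1/2^(b+2) := by
      apply one_div_le_one_div_of_le (by positivity)
      apply pow_le_pow_right₀ (by norm_num)
      omega
    have h2 : (1:ℝ)/2^(b+2) = (1/2^(b+1))/2 := by
      rw [pow_succ]; ring
    have hpos : (0:ℝ) < 1/2^(b+1) := by positivity
    have hlt : (1:ℝ)/2^(a+1) < 1/2^(b+1) := by
      calc (1:ℝ)/2^(a+1) ≤ (1/2^(b+1))/2 := h2 ▸ h1
      _ < 1/2^(b+1) := by linarith
    rw [abs_of_neg (by linarith)]
    linarith [h2 ▸ h1]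

lemma pow_level_inj {n m : ℕ} (h : (1:ℝ)/2^(n+1) = 1/2^(m+1)) : n = m := by
  by_contra hne
  rcases Nat.lt_or_ge n m with hlt | hge
  · have h1 : (2:ℝ)^(n+1) < 2^(m+1) := by
      apply pow_lt_pow_right₀ (by norm_num) (by omega)
    have h2 := one_div_lt_one_div_of_lt (by positivity) h1
    linarith
  · have h1 : (2:ℝ)^(m+1) < 2^(n+1) := by
      apply pow_lt_pow_right₀ (by norm_num) (by omega)
    have h2 := one_div_lt_one_div_of_lt (by positivity) h1
    linarith

lemma same_level_sep {p q : ℝ × ℝ} (hp : p ∈ exDomain) (hq : q ∈ exDomain)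
    (h2 : p.2 = q.2) (hlt : |p.1 - q.1| < if p.2 = 0 then 1 else p.2) : p.1 = q.1 := by
  rcases exDomain_cases hp with (hp'|hp') | ⟨n, k, hk, hp'⟩ <;>
    rcases exDomain_cases hq with (hq'|hq') | ⟨m, j, hj, hq'⟩ <;>
      subst hp' <;> subst hq'
  · rfl
  · norm_num at hlt
  · exact absurd h2.symm (by positivity : (0:ℝ) < 1/2^(m+1)).ne'
  · norm_num at hlt
  · rfl
  · exact absurd h2.symm (by positivity : (0:ℝ) < 1/2^(m+1)).ne'
  · exact absurd h2 (by positivity : (0:ℝ) < 1/2^(n+1)).ne'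
  · exact absurd h2 (by positivity : (0:ℝ) < 1/2^(n+1)).ne'
  · simp only at h2 hlt ⊢
    have hnm : n = m := pow_level_inj h2
    subst hnm
    rw [if_neg (by positivity : (0:ℝ) < 1/2^(n+1)).ne'] at hlt
    rw [div_sub_div_same, abs_div, abs_of_pos (by positivity : (0:ℝ) < 2^(n+1))] at hlt
    have h1 : |(k:ℝ) - j| < 1 := by
      rw [div_lt_div_iff₀ (by positivity) (by positivity)] at hlt
      nlinarith [pow_pos (by norm_num : (0:ℝ) < 2) (n+1)]
    obtain ⟨ha, hb⟩ := abs_sub_lt_iff.mp h1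
    have hkj : k = j := by
      have h3 : (k:ℝ) < (j:ℝ) + 1 := by linarith
      have h4 : (j:ℝ) < (k:ℝ) + 1 := by linarith
      have h3' : k < j + 1 := by exact_mod_cast h3
      have h4' : j < k + 1 := by exact_mod_cast h4
      omega
    rw [hkj]

lemma dist_corner0 {p : ℝ × ℝ} (hp : p ∈ exDomain) :
    exDist p ((0:ℝ),(0:ℝ)) = p.1 + p.2 := by
  obtain ⟨h1, h2, h3⟩ := exDomain_bounds hp
  rw [exDist]
  simp only
  by_cases hb : p.2 = (0:ℝ)
  · rw [if_pos hb, hb, sub_zero, abs_of_nonneg h1, add_zero]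
  · rw [if_neg hb, sub_zero, sub_zero, abs_of_nonneg h3, add_zero,
      min_eq_left (by linarith : p.1 ≤ 2 - p.1)]

lemma dist_corner1 {p : ℝ × ℝ} (hp : p ∈ exDomain) :
    exDist p ((1:ℝ),(0:ℝ)) = (1 - p.1) + p.2 := by
  obtain ⟨h1, h2, h3⟩ := exDomain_bounds hp
  rw [exDist]
  simp only
  by_cases hb : p.2 = (0:ℝ)
  · rw [if_pos hb, hb, abs_sub_comm, abs_of_nonneg (by linarith), add_zero]
  · rw [if_neg hb, sub_zero, abs_of_nonneg h3]
    have hmin : min (p.1 + 1) (2 - p.1 - 1) = 1 - p.1 := by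
      rw [min_eq_right (by linarith)]
      ring
    rw [hmin]

lemma tri0 {p q : ℝ × ℝ} (hp : p ∈ exDomain) (hq : q ∈ exDomain) :
    p.1 + p.2 ≤ exDist p q + (q.1 + q.2) := by
  obtain ⟨hp1, hp2, hp3⟩ := exDomain_bounds hp
  obtain ⟨hq1, hq2, hq3⟩ := exDomain_bounds hq
  rw [exDist]
  by_cases hb : p.2 = q.2
  · rw [if_pos hb]
    have := le_abs_self (p.1 - q.1)
    rw [hb]; linarith
  · rw [if_neg hb]
    have h1 : p.1 - q.1 ≤ min (p.1 + q.1) (2 - p.1 - q.1) :=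
      le_min (by linarith) (by linarith)
    have h2 := le_abs_self (p.2 - q.2)
    linarith

lemma tri1 {p q : ℝ × ℝ} (hp : p ∈ exDomain) (hq : q ∈ exDomain) :
    (1 - p.1) + p.2 ≤ exDist p q + ((1 - q.1) + q.2) := by
  obtain ⟨hp1, hp2, hp3⟩ := exDomain_bounds hp
  obtain ⟨hq1, hq2, hq3⟩ := exDomain_bounds hq
  rw [exDist]
  by_cases hb : p.2 = q.2
  · rw [if_pos hb]
    have := neg_abs_le (p.1 - q.1)
    rw [hb]; linarith
  · rw [if_neg hb]
    have h1 : q.1 - p.1 ≤ min (p.1 + q.1) (2 - p.1 - q.1) :=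
      le_min (by linarith) (by linarith)
    have h2 := le_abs_self (p.2 - q.2)
    linarith

lemma conv_aux (u : ℕ → ℝ × ℝ)
    (hc : ∀ ε > (0:ℝ), ∃ N : ℕ, ∀ m ≥ N, ∀ n ≥ N, exDist (u m) (u n) < ε)
    (F : ℝ × ℝ → ℝ)
    (htri : ∀ m n, F (u m) ≤ exDist (u m) (u n) + F (u n))
    (hsm : ∀ ε > (0:ℝ), ∀ N : ℕ, ∃ n ≥ N, F (u n) < ε) :
    ∀ ε > (0:ℝ), ∃ N : ℕ, ∀ n ≥ N, F (u n) < ε := by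
  intro ε hε
  obtain ⟨N, hN⟩ := hc (ε/2) (by linarith)
  obtain ⟨n₀, hn₀, hF⟩ := hsm (ε/2) (by linarith) N
  refine ⟨N, fun n hn => ?_⟩
  have := hN n hn n₀ hn₀
  have := htri n n₀
  linarith

theorem stmt6 :
    ∀ u : ℕ → ℝ × ℝ, (∀ n, u n ∈ exDomain) →
      (∀ ε > (0 : ℝ), ∃ N : ℕ, ∀ m ≥ N, ∀ n ≥ N, exDist (u m) (u n) < ε) →
      ∃ l ∈ exDomain, ∀ ε > (0 : ℝ), ∃ N : ℕ, ∀ n ≥ N, exDist (u n) l < ε := by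
  intro u hu hc
  by_cases hA : ∀ ε > (0:ℝ), ∀ N : ℕ, ∃ n ≥ N, (u n).1 + (u n).2 < ε
  · refine ⟨((0:ℝ),(0:ℝ)), Set.mem_union_left _ (by simp), ?_⟩
    have h := conv_aux u hc (fun p => p.1 + p.2) (fun m n => tri0 (hu m) (hu n)) hA
    intro ε hε
    obtain ⟨N, hN⟩ := h ε hε
    exact ⟨N, fun n hn => by rw [dist_corner0 (hu n)]; exact hN n hn⟩
  by_cases hB : ∀ ε > (0:ℝ), ∀ N : ℕ, ∃ n ≥ N, (1 - (u n).1) + (u n).2 < ε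
  · refine ⟨((1:ℝ),(0:ℝ)), Set.mem_union_left _ (by simp), ?_⟩
    have h := conv_aux u hc (fun p => (1 - p.1) + p.2) (fun m n => tri1 (hu m) (hu n)) hB
    intro ε hε
    obtain ⟨N, hN⟩ := h ε hε
    exact ⟨N, fun n hn => by rw [dist_corner1 (hu n)]; exact hN n hn⟩
  push_neg at hA hB
  obtain ⟨ε₁, hε₁, N₁, hN₁⟩ := hA
  obtain ⟨ε₂, hε₂, N₂, hN₂⟩ := hB
  have hε₀ : (0:ℝ) < min ε₁ ε₂ := lt_min hε₁ hε₂
  set ε₀ := min ε₁ ε₂ with hε₀def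
  obtain ⟨N₃, hN₃⟩ := hc (ε₀/3) (by linarith)
  set N₄ := max N₁ (max N₂ N₃) with hN₄def
  have hconst : ∀ m ≥ N₄, ∀ n ≥ N₄, (u m).2 = (u n).2 := by
    intro m hm n hn
    by_contra hne
    have hm3 : m ≥ N₃ := le_trans (le_trans (le_max_right _ _) (le_max_right _ _)) hm
    have hn3 : n ≥ N₃ := le_trans (le_trans (le_max_right _ _) (le_max_right _ _)) hn
    have hd := hN₃ m hm3 n hn3
    rw [exDist, if_neg hne] at hd
    have hb := level_gap (exDomain_level (hu n)) (exDomain_level (hu m)) (fun h => hne h.symm)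
    rw [abs_sub_comm] at hb
    obtain ⟨bm1, bm2, bm3⟩ := exDomain_bounds (hu m)
    obtain ⟨bn1, bn2, bn3⟩ := exDomain_bounds (hu n)
    have habs : (0:ℝ) ≤ |(u m).2 - (u n).2| := abs_nonneg _
    have hee : ε₀ ≤ ε₁ := min_le_left _ _
    have hee2 : ε₀ ≤ ε₂ := min_le_right _ _
    rcases le_or_gt ((u m).1 + (u n).1) (2 - (u m).1 - (u n).1) with hmin | hmin
    · rw [min_eq_left hmin] at hd
      have hcon : (u n).1 + (u n).2 < ε₁ := by linarith
      exact absurd hcon (not_lt.mpr (hN₁ n (le_trans (le_max_left _ _) hn)))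
    · rw [min_eq_right hmin.le] at hd
      have hcon : (1 - (u n).1) + (u n).2 < ε₂ := by linarith
      exact absurd hcon (not_lt.mpr (hN₂ n (le_trans (le_trans (le_max_left _ _) (le_max_right _ _)) hn)))
  set b := (u N₄).2 with hbdef
  set δ : ℝ := if b = 0 then 1 else b with hδdef
  have hδ : 0 < δ := by
    by_cases hb : b = 0
    · rw [hδdef, if_pos hb]; norm_num
    · rw [hδdef, if_neg hb]
      exact lt_of_le_of_ne (exDomain_bounds (hu N₄)).2.2 (Ne.symm hb)
  obtain ⟨N₅', hN₅⟩ := hc δ hδ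
  set N₆ := max N₄ N₅' with hN₆def
  have key : ∀ n ≥ N₆, u n = u N₆ := by
    intro n hn
    have hn4 : n ≥ N₄ := le_trans (le_max_left _ _) hn
    have h2 : (u n).2 = (u N₆).2 := hconst n hn4 N₆ (le_max_left _ _)
    have hd := hN₅ n (le_trans (le_max_right _ _) hn) N₆ (le_max_right _ _)
    rw [exDist, if_pos h2] at hd
    have hb2 : (u n).2 = b := hconst n hn4 N₄ le_rfl
    have h1 : (u n).1 = (u N₆).1 := by
      apply same_level_sep (hu n) (hu N₆) h2
      rw [hb2, ← hδdef]
      exact hd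
    exact Prod.ext h1 h2
  refine ⟨u N₆, hu N₆, ?_⟩
  intro ε hε
  refine ⟨N₆, fun n hn => ?_⟩
  rw [key n hn, exDist, if_pos rfl, sub_self, abs_zero]
  exact hε
end

section
/- Let M be the metric space ⋃_{n≥0} S_n with S_0 = {(0,0),(1,0)}, S_n = { (k/2^n, 1/2^n) : 0 ≤ k ≤ 2^n }, and metric d((a₁,b₁),(a₂,b₂)) = |a₁ − a₂| if b₁ = b₂ and min{a₁+a₂, 2−a₁−a₂} + |b₁−b₂| otherwise. Let x = (0,0) and y = (1,0). Then for every n ∈ ℕ, the point z := (1/2, 1/2^{n+2}) satisfies d(x,z) + d(y,z) < d(x,y) + 1/2^n but z ∉ B(x, 1/2) ∪ B(y, 1/2). -/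
/-- for every `n`, the point `z = (1/2, 1/2^(n+2))` of `exDomain` lies
in the approximate segment `[x,y]_{1/2^n}` between `x = (0,0)` and `y = (1,0)`, but
outside `B(x,1/2) ∪ B(y,1/2)`. -/
theorem stmt7 (n : ℕ) :
    ((1 : ℝ) / 2, (1 : ℝ) / 2 ^ (n + 2)) ∈ exDomain ∧
    exDist ((0 : ℝ), (0 : ℝ)) ((1 : ℝ) / 2, (1 : ℝ) / 2 ^ (n + 2)) +
        exDist ((1 : ℝ), (0 : ℝ)) ((1 : ℝ) / 2, (1 : ℝ) / 2 ^ (n + 2)) <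
      exDist ((0 : ℝ), (0 : ℝ)) ((1 : ℝ), (0 : ℝ)) + 1 / 2 ^ n ∧
    (1 : ℝ) / 2 < exDist ((0 : ℝ), (0 : ℝ)) ((1 : ℝ) / 2, (1 : ℝ) / 2 ^ (n + 2)) ∧
    (1 : ℝ) / 2 < exDist ((1 : ℝ), (0 : ℝ)) ((1 : ℝ) / 2, (1 : ℝ) / 2 ^ (n + 2)) := by
  have h2 : (0:ℝ) < 2 ^ (n + 2) := by positivity
  have hne : ((0:ℝ)) ≠ 1 / 2 ^ (n + 2) := by
    intro h; rw [eq_comm, div_eq_zero_iff] at h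
    rcases h with h | h
    · norm_num at h
    · linarith
  have hd1 : exDist ((0 : ℝ), (0 : ℝ)) ((1 : ℝ) / 2, (1 : ℝ) / 2 ^ (n + 2))
      = 1/2 + 1 / 2 ^ (n + 2) := by
    simp only [exDist, if_neg hne]
    have hmin : min ((0:ℝ) + 1/2) (2 - 0 - 1/2) = 1/2 := by norm_num
    rw [show ((0:ℝ),(0:ℝ)).1 + ((1:ℝ)/2, (1:ℝ)/2^(n+2)).1 = 0 + 1/2 from rfl]
    norm_num
  have hd2 : exDist ((1 : ℝ), (0 : ℝ)) ((1 : ℝ) / 2, (1 : ℝ) / 2 ^ (n + 2))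
      = 1/2 + 1 / 2 ^ (n + 2) := by
    simp only [exDist, if_neg hne]
    norm_num
  have hdxy : exDist ((0 : ℝ), (0 : ℝ)) ((1 : ℝ), (0 : ℝ)) = 1 := by
    simp [exDist]
  refine ⟨?_, ?_, ?_, ?_⟩
  · right
    refine Set.mem_iUnion.2 ⟨n + 1, ⟨2 ^ (n + 1), Nat.pow_le_pow_right (by norm_num) (by omega), ?_⟩⟩
    have : ((2:ℝ) ^ (n + 1)) / 2 ^ (n + 2) = 1 / 2 := by
      rw [pow_succ]; field_simp; ring
    push_cast
    rw [this]
  · have heq : (2:ℝ) * (1 / 2 ^ (n + 2)) = 1 / 2 ^ (n + 1) := by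
      rw [pow_succ]; field_simp; try ring
    have hlt : (1:ℝ) / 2 ^ (n + 1) < 1 / 2 ^ n := by
      apply div_lt_div_of_pos_left one_pos (by positivity)
      rw [pow_succ]
      nlinarith [pow_pos (show (0:ℝ) < 2 by norm_num) n]
    rw [hd1, hd2, hdxy]; linarith
  · have := div_pos one_pos h2
    rw [hd1]; linarith
  · have := div_pos one_pos h2
    rw [hd2]; linarith
end

section
/- Let M be a metric space with base point 0 and let x, y, u, v ∈ M with x ≠ y, u ≠ v. Suppose d(x,y) ≥ d(u,v). Then for every 1-Lipschitz function f : M → ℝ with f(0) = 0, one has (f(x) − f(y))/d(x,y) + (f(u) − f(v))/d(u,v) ≤ (d(x,v) + d(u,y) + d(x,y) − d(u,v)) / d(x,y). -/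
/-- upper estimate for the action of a norm-one Lipschitz function on
the sum of molecules `m_{xy} + m_{uv}` when `d(x,y) ≥ d(u,v)`. -/
theorem stmt10 {M : Type*} [MetricSpace M] (z x y u v : M)
    (hxy : x ≠ y) (huv : u ≠ v) (hd : dist u v ≤ dist x y)
    (f : M → ℝ) (hf : LipschitzWith 1 f) (hf0 : f z = 0) :
    (f x - f y) / dist x y + (f u - f v) / dist u v ≤
      (dist x v + dist u y + dist x y - dist u v) / dist x y := by
  have hA : 0 < dist x y := dist_pos.mpr hxy
  have hB : 0 < dist u v := dist_pos.mpr huv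
  have hle : ∀ p q : M, f p - f q ≤ dist p q := fun p q => by
    have := hf.dist_le_mul p q
    rw [NNReal.coe_one, one_mul, Real.dist_eq] at this
    exact (le_abs_self _).trans this
  have h1 : f x - f v ≤ dist x v := hle x v
  have h2 : f u - f y ≤ dist u y := hle u y
  have h3 : f u - f v ≤ dist u v := hle u v
  have hc : 0 ≤ dist x y / dist u v - 1 := by
    rw [sub_nonneg, le_div_iff₀ hB, one_mul]; exact hd
  have key : (f x - f y) + dist x y / dist u v * (f u - f v) ≤
      dist x v + dist u y + dist x y - dist u v := by
    have e : (f x - f y) + dist x y / dist u v * (f u - f v) =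
        (f x - f v) + (f u - f y) + (dist x y / dist u v - 1) * (f u - f v) := by
      ring
    rw [e]
    have h4 : (dist x y / dist u v - 1) * (f u - f v) ≤
        (dist x y / dist u v - 1) * dist u v := by
      exact mul_le_mul_of_nonneg_left h3 hc
    have h5 : (dist x y / dist u v - 1) * dist u v = dist x y - dist u v := by
      field_simp
    linarith
  calc (f x - f y) / dist x y + (f u - f v) / dist u v
      = ((f x - f y) + dist x y / dist u v * (f u - f v)) / dist x y := by
        field_simp
    _ ≤ (dist x v + dist u y + dist x y - dist u v) / dist x y := by
        gcongr
end

section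
/- Let M be a metric space with base point 0, and let n ∈ ℕ, λ₁,…,λₙ > 0 with Σλᵢ = 1, and pairs (xᵢ, yᵢ) with xᵢ ≠ yᵢ such that μ := Σᵢ λᵢ m_{xᵢyᵢ} has norm 1 in F(M). Then for any m ≥ 1 and indices k₁,…,k_{m+1} ∈ {1,…,n} with k₁ = k_{m+1}, one has Σ_{j=1}^m d(x_{k_j}, y_{k_{j+1}}) ≥ Σ_{j=1}^m d(x_{k_j}, y_{k_j}). -/
/-- An abstract characterization of the Lipschitz-free space `F(M)` over a pointed
metric space `(M, base)`: a normed space `X` together with a map `δ : M → X`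
(the canonical embedding) such that `δ base = 0`, the span of `δ(M)` is dense,
every `1`-Lipschitz function vanishing at the base point extends to a functional of
norm at most one, and every functional of norm at most one induces a `1`-Lipschitz
function on `M`. These properties determine `F(M)` up to isometric isomorphism. -/
structure IsLipschitzFreeSpace (M : Type*) [MetricSpace M] (base : M)
    (X : Type*) [NormedAddCommGroup X] [NormedSpace ℝ X] (δ : M → X) : Prop where
  map_base : δ base = 0
  dense_span : (Submodule.span ℝ (Set.range δ)).topologicalClosure = ⊤
  extend_lipschitz : ∀ g : M → ℝ, LipschitzWith 1 g → g base = 0 →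
    ∃ φ : X →L[ℝ] ℝ, ‖φ‖ ≤ 1 ∧ ∀ p, φ (δ p) = g p
  lipschitz_of_dual : ∀ φ : X →L[ℝ] ℝ, ‖φ‖ ≤ 1 →
    LipschitzWith 1 (fun p => φ (δ p))

/-- The molecule `m_{xy} = (δ_x - δ_y) / d(x,y)`. -/
noncomputable def molecule {M : Type*} [MetricSpace M]
    {X : Type*} [NormedAddCommGroup X] [NormedSpace ℝ X]
    (δ : M → X) (x y : M) : X :=
  (dist x y)⁻¹ • (δ x - δ y)

/-- `μ` is a Daugavet-point: every slice `S(f,α)` of the unit ball contains, for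
every `ε > 0`, an element at distance at least `2 - ε` from `μ`. -/
def IsDaugavetPoint {X : Type*} [NormedAddCommGroup X] [NormedSpace ℝ X]
    (μ : X) : Prop :=
  ∀ f : X →L[ℝ] ℝ, ‖f‖ = 1 → ∀ α : ℝ, 0 < α → ∀ ε : ℝ, 0 < ε →
    ∃ ν : X, ‖ν‖ ≤ 1 ∧ f ν > 1 - α ∧ 2 - ε ≤ ‖μ - ν‖

/-- `μ` is a Δ-point: every slice `S(f,α)` of the unit ball containing `μ`
contains, for every `ε > 0`, an element at distance at least `2 - ε` from `μ`. -/
def IsDeltaPoint {X : Type*} [NormedAddCommGroup X] [NormedSpace ℝ X]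
    (μ : X) : Prop :=
  ∀ f : X →L[ℝ] ℝ, ‖f‖ = 1 → ∀ α : ℝ, 0 < α → f μ > 1 - α →
    ∀ ε : ℝ, 0 < ε → ∃ ν : X, ‖ν‖ ≤ 1 ∧ f ν > 1 - α ∧ 2 - ε ≤ ‖μ - ν‖

/-- `ν` is a denting point of the unit ball: `‖ν‖ ≤ 1` and `ν` belongs to slices of
the unit ball of arbitrarily small diameter. -/
def IsDentingPoint {X : Type*} [NormedAddCommGroup X] [NormedSpace ℝ X]
    (ν : X) : Prop :=
  ‖ν‖ ≤ 1 ∧ ∀ ε : ℝ, 0 < ε → ∃ f : X →L[ℝ] ℝ, ∃ α : ℝ, ‖f‖ = 1 ∧ 0 < α ∧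
    f ν > 1 - α ∧ ∀ w w' : X, ‖w‖ ≤ 1 → f w > 1 - α → ‖w'‖ ≤ 1 → f w' > 1 - α →
      ‖w - w'‖ < ε

/-- if `μ = Σᵢ λᵢ m_{xᵢyᵢ}` is a norm-one convex combination of
molecules, then the cyclic inequality
`Σⱼ d(x_{kⱼ}, y_{k_{j+1}}) ≥ Σⱼ d(x_{kⱼ}, y_{kⱼ})` holds for every cycle of
indices. -/
theorem stmt15 {M : Type*} [MetricSpace M] (base : M)
    {X : Type*} [NormedAddCommGroup X] [NormedSpace ℝ X] (δ : M → X)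
    (hfree : IsLipschitzFreeSpace M base X δ)
    (n : ℕ) (lam : Fin n → ℝ) (x y : Fin n → M)
    (hlam : ∀ i, 0 < lam i) (hsum : ∑ i, lam i = 1)
    (hxy : ∀ i, x i ≠ y i)
    (hnorm : ‖∑ i, lam i • molecule δ (x i) (y i)‖ = 1) :
    ∀ m : ℕ, 1 ≤ m → ∀ k : ℕ → Fin n, k m = k 0 →
      ∑ j ∈ Finset.range m, dist (x (k j)) (y (k (j + 1))) ≥
        ∑ j ∈ Finset.range m, dist (x (k j)) (y (k j)) := by
  intro m hm k hk
  have hμ : (∑ i, lam i • molecule δ (x i) (y i)) ≠ 0 := by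
    intro h; rw [h, norm_zero] at hnorm; norm_num at hnorm
  obtain ⟨φ, hφ1, hφμ⟩ := exists_dual_vector ℝ _ (norm_ne_zero_iff.2 hμ)
  rw [hnorm] at hφμ
  have hφμ' : φ (∑ i, lam i • molecule δ (x i) (y i)) = 1 := by exact_mod_cast hφμ
  have hlip := hfree.lipschitz_of_dual φ hφ1.le
  set g : M → ℝ := fun p => φ (δ p) with hg
  have hle : ∀ p q : M, g p - g q ≤ dist p q := by
    intro p q
    have h2 := hlip.dist_le_mul p q
    rw [NNReal.coe_one, one_mul] at h2
    calc g p - g q ≤ |g p - g q| := le_abs_self _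
      _ = dist (g p) (g q) := (Real.dist_eq _ _).symm
      _ ≤ dist p q := h2
  have hφsum : ∑ i, lam i * ((dist (x i) (y i))⁻¹ * (g (x i) - g (y i))) = 1 := by
    rw [← hφμ', map_sum]
    refine Finset.sum_congr rfl fun i _ => ?_
    simp [molecule, smul_smul, map_smul, map_sub, smul_eq_mul, hg, mul_assoc]
  have hterm : ∀ i ∈ Finset.univ, lam i * ((dist (x i) (y i))⁻¹ * (g (x i) - g (y i))) ≤ lam i := by
    intro i _
    have hd : 0 < dist (x i) (y i) := dist_pos.2 (hxy i)
    have : (dist (x i) (y i))⁻¹ * (g (x i) - g (y i)) ≤ 1 := by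
      rw [inv_mul_le_iff₀ hd, mul_one]
      exact hle _ _
    calc lam i * ((dist (x i) (y i))⁻¹ * (g (x i) - g (y i))) ≤ lam i * 1 :=
          mul_le_mul_of_nonneg_left this (hlam i).le
      _ = lam i := mul_one _
  have heq := (Finset.sum_eq_sum_iff_of_le hterm).1 (by rw [hφsum, hsum])
  have heach : ∀ i, g (x i) - g (y i) = dist (x i) (y i) := by
    intro i
    have h1 := heq i (Finset.mem_univ i)
    have hd : 0 < dist (x i) (y i) := dist_pos.2 (hxy i)
    have h2 : (dist (x i) (y i))⁻¹ * (g (x i) - g (y i)) = 1 :=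
      mul_left_cancel₀ (hlam i).ne' (by rw [mul_one]; exact h1)
    field_simp at h2
    linarith
  have htel : ∑ j ∈ Finset.range m, (g (y (k j)) - g (y (k (j + 1)))) = 0 := by
    rw [Finset.sum_range_sub' (fun j => g (y (k j))) m, hk, sub_self]
  calc ∑ j ∈ Finset.range m, dist (x (k j)) (y (k (j + 1)))
      ≥ ∑ j ∈ Finset.range m, (g (x (k j)) - g (y (k (j + 1)))) :=
        Finset.sum_le_sum fun j _ => hle _ _
    _ = ∑ j ∈ Finset.range m, ((g (x (k j)) - g (y (k j))) + (g (y (k j)) - g (y (k (j + 1))))) := by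
        refine Finset.sum_congr rfl fun j _ => ?_; ring
    _ = ∑ j ∈ Finset.range m, (g (x (k j)) - g (y (k j))) + ∑ j ∈ Finset.range m, (g (y (k j)) - g (y (k (j + 1)))) :=
        Finset.sum_add_distrib
    _ = ∑ j ∈ Finset.range m, dist (x (k j)) (y (k j)) := by
        rw [htel, add_zero]
        exact Finset.sum_congr rfl fun j _ => heach _
end
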